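/- arXiv:1512.04521 — 3 statements merged into one kernel-verified Lean document; each statement's English description precedes it below -/
import Mathlib

section
/- For all $\zeta,\beta\in\mathcal B$, define the bounded $\mathbb C$-linear operator $L:\mathcal B\to\mathcal B$ by $L(b)=\overline{\zeta}\,\sigma_1(b)\,\zeta+\overline{\beta}\,b+b\,\beta$. Then for every $t\ge 0$ the operator exponential $\exp(tL)$ (computed in the Banach algebra of bounded linear operators on $\mathcal B$) maps positive elements of $\mathcal B$ to positive elements of $\mathcal B$; that is, if $b\ge 0$ in $\mathcal B$ then $(\exp(tL))(b)\ge 0$. -/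
/- `𝒜` denotes the C*-algebra of bounded continuous functions `[0,∞) → ℂ` (sup norm,
pointwise operations, conjugation as involution), realized as `BoundedContinuousFunction ℝ≥0 ℂ`.
The paper's algebra `ℬ = C₀[0,∞) + ℂ·1` is the set of `f ∈ 𝒜` possessing a limit at
infinity (`memB`), and `C₀[0,∞)` is the set of `f ∈ 𝒜` vanishing at infinity (`memC0`).
Positivity `0 ≤ b` in `ℬ` is the C*-order, i.e. pointwise `0 ≤ b s` in `ℂ`
(with the `ComplexOrder`). -/

open Filter BoundedContinuousFunction NormedSpace
open scoped NNReal ComplexOrder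

set_option maxHeartbeats 1000000
set_option synthInstance.maxHeartbeats 400000

noncomputable section

abbrev A : Type := BoundedContinuousFunction ℝ≥0 ℂ

/-- the left shift `σ_t`, `(σ_t f)(s) = f (s + t)`. -/
def sigma (t : ℝ≥0) (f : A) : A :=
  f.compContinuous ⟨fun s => s + t, by continuity⟩

/-- membership in `ℬ = C₀[0,∞) + ℂ·1`: existence of a limit at infinity. -/
def memB (f : A) : Prop := ∃ c : ℂ, Tendsto ⇑f atTop (nhds c)

/-- membership in `C₀[0,∞)`: vanishing at infinity. -/
def memC0 (f : A) : Prop := Tendsto ⇑f atTop (nhds 0)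

namespace Stmt0Aux

section Generic

variable {E : Type} [NormedAddCommGroup E] [NormedSpace ℂ E] [CompleteSpace E]

lemma exp_apply_hasSum (M : E →L[ℂ] E) (b : E) :
    HasSum (fun n : ℕ => ((n.factorial : ℂ))⁻¹ • (M ^ n) b) (exp M b) := by
  have hsum := expSeries_summable' (𝕂 := ℂ) M
  have h := hsum.hasSum.mapL (ContinuousLinearMap.apply ℂ E b)
  have he : exp M b = (∑' n : ℕ, ((n.factorial : ℂ))⁻¹ • M ^ n) b := by
    rw [exp_eq_tsum ℂ]
  rw [he]
  simpa only [ContinuousLinearMap.apply_apply, ContinuousLinearMap.smul_apply] using h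

lemma exp_apply_mem (S : Set E) (hS : IsClosed S) (h0 : (0 : E) ∈ S)
    (hadd : ∀ x ∈ S, ∀ y ∈ S, x + y ∈ S)
    (M : E →L[ℂ] E) (b : E)
    (hterm : ∀ n : ℕ, ((n.factorial : ℂ))⁻¹ • (M ^ n) b ∈ S) :
    exp M b ∈ S := by
  have h := exp_apply_hasSum M b
  refine hS.mem_of_tendsto h.tendsto_sum_nat (Eventually.of_forall fun n => ?_)
  induction n with
  | zero => simpa using h0
  | succ k ih =>
      rw [Finset.sum_range_succ]
      exact hadd _ ih _ (hterm k)

lemma exp_add_smul_one_apply (X : E →L[ℂ] E) (w : ℂ) (b : E) :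
    exp (X + w • (1 : E →L[ℂ] E)) b = Complex.exp w • (exp X b) := by
  have hcomm : Commute X (w • (1 : E →L[ℂ] E)) := (Commute.one_right X).smul_right w
  rw [exp_add_of_commute_of_mem_ball (𝕂 := ℂ) hcomm
    ((expSeries_radius_eq_top ℂ (E →L[ℂ] E)).symm ▸ edist_lt_top _ _)
    ((expSeries_radius_eq_top ℂ (E →L[ℂ] E)).symm ▸ edist_lt_top _ _)]
  have hexp1 : exp (w • (1 : E →L[ℂ] E)) = Complex.exp w • (1 : E →L[ℂ] E) := by
    rw [← Algebra.algebraMap_eq_smul_one, ← algebraMap_exp_comm,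
      Algebra.algebraMap_eq_smul_one, Complex.exp_eq_exp_ℂ]
  rw [ContinuousLinearMap.mul_apply, hexp1, ContinuousLinearMap.smul_apply,
    ContinuousLinearMap.one_apply, ContinuousLinearMap.map_smul]

lemma smul_add_smul_one (X : E →L[ℂ] E) (u v : ℂ) :
    u • (X + v • (1 : E →L[ℂ] E)) + (-(u * v)) • (1 : E →L[ℂ] E) = u • X := by
  module

end Generic

lemma memB_zero : memB 0 :=
  ⟨0, by rw [show ⇑(0 : A) = fun _ : ℝ≥0 => (0 : ℂ) from rfl]; exact tendsto_const_nhds⟩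

lemma memB_add {f g : A} (hf : memB f) (hg : memB g) : memB (f + g) := by
  obtain ⟨c, hc⟩ := hf; obtain ⟨d, hd⟩ := hg
  exact ⟨c + d, by rw [coe_add]; exact hc.add hd⟩

lemma memB_smul (z : ℂ) {f : A} (hf : memB f) : memB (z • f) := by
  obtain ⟨c, hc⟩ := hf
  exact ⟨z * c, by simpa using hc.const_mul z⟩

lemma memB_mul {f g : A} (hf : memB f) (hg : memB g) : memB (f * g) := by
  obtain ⟨c, hc⟩ := hf; obtain ⟨d, hd⟩ := hg
  exact ⟨c * d, by rw [coe_mul]; exact hc.mul hd⟩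

lemma memB_star {f : A} (hf : memB f) : memB (star f) := by
  obtain ⟨c, hc⟩ := hf
  refine ⟨star c, ?_⟩
  have h := (continuous_star.tendsto c).comp hc
  have heq : ⇑(star f) = (fun z : ℂ => star z) ∘ ⇑f := rfl
  rw [heq]
  exact h

lemma memB_sigma {f : A} (hf : memB f) : memB (sigma 1 f) := by
  obtain ⟨c, hc⟩ := hf
  refine ⟨c, ?_⟩
  have h1 : Tendsto (fun s : ℝ≥0 => s + 1) atTop atTop :=
    tendsto_atTop_mono (fun s => le_self_add) tendsto_id
  have heq : ⇑(sigma 1 f) = ⇑f ∘ (fun s : ℝ≥0 => s + 1) := rfl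
  rw [heq]
  exact hc.comp h1

lemma isClosed_memB : IsClosed {f : A | memB f} := by
  refine IsSeqClosed.isClosed ?_
  intro u f hu huf
  choose c hc using hu
  have hdist : ∀ n m, dist (c n) (c m) ≤ dist (u n) (u m) := by
    intro n m
    have h : Tendsto (fun s => dist (u n s) (u m s)) atTop (nhds (dist (c n) (c m))) :=
      (hc n).dist (hc m)
    exact le_of_tendsto h (Eventually.of_forall fun s => dist_coe_le_dist s)
  have hcauchy : CauchySeq c := by
    have hu' : CauchySeq u := huf.cauchySeq
    rw [Metric.cauchySeq_iff] at hu' ⊢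
    intro ε hε
    obtain ⟨N, hN⟩ := hu' ε hε
    exact ⟨N, fun n hn m hm => lt_of_le_of_lt (hdist n m) (hN n hn m hm)⟩
  obtain ⟨l, hl⟩ := cauchySeq_tendsto_of_complete hcauchy
  refine ⟨l, Metric.tendsto_nhds.2 fun ε hε => ?_⟩
  have h1 := (Metric.tendsto_nhds.1 huf) (ε/3) (by linarith)
  have h2 := (Metric.tendsto_nhds.1 hl) (ε/3) (by linarith)
  obtain ⟨n, hn1, hn2⟩ := (h1.and h2).exists
  filter_upwards [(Metric.tendsto_nhds.1 (hc n)) (ε/3) (by linarith)] with s hs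
  have hd : dist (f s) (u n s) ≤ dist f (u n) := dist_coe_le_dist s
  have hd1 : dist (f s) (u n s) < ε/3 := lt_of_le_of_lt hd (by rwa [dist_comm] at hn1)
  calc dist (f s) l ≤ dist (f s) (u n s) + dist (u n s) (c n) + dist (c n) l :=
        dist_triangle4 _ _ _ _
    _ < ε/3 + ε/3 + ε/3 := add_lt_add (add_lt_add hd1 hs) hn2
    _ = ε := by ring

lemma isClosed_pos : IsClosed {f : A | ∀ s : ℝ≥0, 0 ≤ f s} := by
  have h : {f : A | ∀ s : ℝ≥0, 0 ≤ f s}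
      = ⋂ s : ℝ≥0, (fun f : A => f s) ⁻¹' {z : ℂ | 0 ≤ z} := by
    ext f; simp [Set.mem_iInter]
  rw [h]
  refine isClosed_iInter fun s => IsClosed.preimage
    (BoundedContinuousFunction.lipschitz_eval_const s).continuous ?_
  have h2 : {z : ℂ | 0 ≤ z} = Complex.re ⁻¹' Set.Ici 0 ∩ Complex.im ⁻¹' {0} := by
    ext z
    simp [Complex.le_def, eq_comm]
  rw [h2]
  exact (isClosed_Ici.preimage Complex.continuous_re).inter
    (isClosed_singleton.preimage Complex.continuous_im)

end Stmt0Aux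

open Stmt0Aux

/-- For `ζ, β ∈ ℬ`, the bounded linear operator
`L(b) = ζ̄ σ₁(b) ζ + β̄ b + b β` on `ℬ` satisfies: for every `t ≥ 0`, the operator
exponential `exp (t L)` maps positive elements of `ℬ` to positive elements of `ℬ`. -/
theorem stmt0 (ζ β : A) (hζ : memB ζ) (hβ : memB β)
    (L : A →L[ℂ] A)
    (hL : ∀ b : A, L b = star ζ * sigma 1 b * ζ + star β * b + b * β)
    (t : ℝ) (ht : 0 ≤ t)
    (b : A) (hb : memB b) (hbpos : ∀ s : ℝ≥0, 0 ≤ b s) :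
    memB (exp ((t : ℂ) • L) b) ∧ ∀ s : ℝ≥0, 0 ≤ (exp ((t : ℂ) • L) b) s := by
  have hLmemB : ∀ g : A, memB g → memB (L g) := by
    intro g hg
    rw [hL]
    exact memB_add (memB_add (memB_mul (memB_mul (memB_star hζ) (memB_sigma hg)) hζ)
      (memB_mul (memB_star hβ) hg)) (memB_mul hg hβ)
  constructor
  · -- memB part
    refine exp_apply_mem _ isClosed_memB memB_zero (fun x hx y hy => memB_add hx hy) _ _ ?_
    intro n
    refine memB_smul _ ?_
    induction n with
    | zero => simpa using hb
    | succ k ih =>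
        rw [pow_succ', ContinuousLinearMap.mul_apply, ContinuousLinearMap.smul_apply]
        exact memB_smul _ (hLmemB _ ih)
  · -- positivity part
    set c : ℝ := 2 * ‖β‖ with hc
    have hc0 : 0 ≤ c := by positivity
    set K : A →L[ℂ] A := L + (c : ℂ) • (1 : A →L[ℂ] A) with hK
    have hKpos : ∀ g : A, (∀ s, 0 ≤ g s) → ∀ s, 0 ≤ (K g) s := by
      intro g hg s
      have hsig : sigma 1 g s = g (s + 1) := rfl
      have h0 : (K g) s = star (ζ s) * g (s + 1) * ζ s + (star (β s) + β s + (c : ℂ)) * g s := by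
        rw [hK, ContinuousLinearMap.add_apply, ContinuousLinearMap.smul_apply,
          ContinuousLinearMap.one_apply, hL]
        simp only [coe_add, coe_mul, coe_smul, Pi.add_apply, Pi.mul_apply, Pi.smul_apply,
          star_apply, smul_eq_mul, hsig]
        ring
      rw [h0]
      have e1 : star (ζ s) * g (s + 1) * ζ s = (Complex.normSq (ζ s) : ℂ) * g (s + 1) := by
        rw [Complex.star_def, ← Complex.mul_conj]; ring
      have e2 : star (β s) + β s + (c : ℂ) = ((2 * (β s).re + c : ℝ) : ℂ) := by
        rw [Complex.star_def, add_comm ((starRingEnd ℂ) (β s)), Complex.add_conj]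
        push_cast; ring
      rw [e1, e2]
      have hterm1 : 0 ≤ (Complex.normSq (ζ s) : ℂ) * g (s + 1) :=
        mul_nonneg (Complex.zero_le_real.2 (Complex.normSq_nonneg _)) (hg _)
      have hterm2 : 0 ≤ ((2 * (β s).re + c : ℝ) : ℂ) * g s := by
        refine mul_nonneg (Complex.zero_le_real.2 ?_) (hg s)
        have hre : |(β s).re| ≤ ‖β‖ := by
          calc |(β s).re| ≤ ‖β s‖ := Complex.abs_re_le_norm _
            _ = ‖β s‖ := rfl
            _ ≤ ‖β‖ := norm_coe_le_norm β s
        have h := abs_le.1 hre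
        rw [hc]; linarith [h.1]
      exact add_nonneg hterm1 hterm2
    have hML : (t : ℂ) • L = (t : ℂ) • K + (-(((t : ℂ)) * (c : ℂ))) • (1 : A →L[ℂ] A) := by
      rw [hK, ← smul_add_smul_one L (t : ℂ) (c : ℂ)]
    have hKexp : ∀ s : ℝ≥0, 0 ≤ (exp ((t : ℂ) • K) b) s := by
      have hmem : exp ((t : ℂ) • K) b ∈ {f : A | ∀ s : ℝ≥0, 0 ≤ f s} := by
        refine exp_apply_mem _ isClosed_pos (fun s => by simp) ?_ _ _ ?_
        · intro x hx y hy s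
          simp only [coe_add, Pi.add_apply]
          exact add_nonneg (hx s) (hy s)
        · intro n
          have hKn : ∀ g : A, (∀ s, 0 ≤ g s) → ∀ s, 0 ≤ ((K ^ n) g) s := by
            induction n with
            | zero => intro g hg s; simpa using hg s
            | succ k ih =>
                intro g hg s
                rw [pow_succ', ContinuousLinearMap.mul_apply]
                exact hKpos _ (ih g hg) s
          intro s
          have hpow : ∀ (m : ℕ) (g : A), (((t : ℂ) • K) ^ m) g = (t : ℂ) ^ m • ((K ^ m) g) := by
            intro m
            induction m with
            | zero => intro g; simp
            | succ k ih =>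
                intro g
                simp only [pow_succ', ContinuousLinearMap.mul_apply, ih,
                  ContinuousLinearMap.smul_apply, map_smul, smul_smul]
                rw [mul_comm]
          have heq : (((n.factorial : ℂ))⁻¹ • (((t : ℂ) • K) ^ n) b) s
              = (((n.factorial : ℝ)⁻¹ * t ^ n : ℝ) : ℂ) * ((K ^ n) b s) := by
            rw [hpow, smul_smul]
            simp only [coe_smul, Pi.smul_apply, smul_eq_mul]
            push_cast
            ring
          rw [heq]
          exact mul_nonneg (Complex.zero_le_real.2 (by positivity)) (hKn b hbpos s)
      exact hmem
    intro s
    have hfinal : exp ((t : ℂ) • L) b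
        = Complex.exp (-(((t : ℂ)) * (c : ℂ))) • (exp ((t : ℂ) • K) b) := by
      rw [hML, exp_add_smul_one_apply]
    rw [hfinal]
    have hexpw : 0 ≤ Complex.exp (-(((t : ℂ)) * (c : ℂ))) := by
      have : (-(((t : ℂ)) * (c : ℂ))) = ((-(t * c) : ℝ) : ℂ) := by push_cast; ring
      rw [this, ← Complex.ofReal_exp]
      exact Complex.zero_le_real.2 (Real.exp_pos _).le
    have := hKexp s
    simp only [coe_smul, Pi.smul_apply, smul_eq_mul]
    exact mul_nonneg hexpw this
end
end

section
/- For every $t\ge 0$, every finite family of pairs $(\zeta_1,\beta_1),\dots,(\zeta_k,\beta_k)\in\mathcal B\times\mathcal B$ and all $b_1,\dots,b_k,c_1,\dots,c_k\in\mathcal B$, one has $\sum_{i,j=1}^{k} b_i^*\,\bigl(\exp\bigl(t\,\mathcal L^{(\zeta_i,\beta_i),(\zeta_j,\beta_j)}\bigr)\bigr)(c_i^*\,c_j)\,b_j\ \ge\ 0$ in $\mathcal B$, where $\exp$ is the operator exponential in the Banach algebra of bounded linear operators on $\mathcal B$. (Complete positive definiteness of the CPD-semigroup $\mathcal K_t=e^{t\mathcal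 L}$ in this example.) -/
/- `𝒜` denotes the C*-algebra of bounded continuous functions `[0,∞) → ℂ` (sup norm,
pointwise operations, conjugation as involution), realized as `BoundedContinuousFunction ℝ≥0 ℂ`.
The paper's algebra `ℬ = C₀[0,∞) + ℂ·1` is the set of `f ∈ 𝒜` possessing a limit at
infinity (`memB`), and `C₀[0,∞)` is the set of `f ∈ 𝒜` vanishing at infinity (`memC0`).
Positivity `0 ≤ b` in `ℬ` is the C*-order, i.e. pointwise `0 ≤ b s` in `ℂ`
(with the `ComplexOrder`). -/

open Filter BoundedContinuousFunction NormedSpace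
open scoped NNReal ComplexOrder

noncomputable section

/-! ### Auxiliary material -/

open Topology Nat

set_option maxHeartbeats 1000000

instance : Nontrivial A :=
  nontrivial_of_ne 0 1 fun h => zero_ne_one (α := ℂ) (by simpa using DFunLike.congr_fun h 0)

lemma sigma_mul (f g : A) : sigma 1 (f * g) = sigma 1 f * sigma 1 g := by ext s; rfl
lemma sigma_star (f : A) : sigma 1 (star f) = star (sigma 1 f) := by ext s; rfl

/-- the left shift `σ₁` as a continuous linear operator. -/
def shift : A →L[ℂ] A :=
  LinearMap.mkContinuous
    { toFun := sigma 1
      map_add' := fun f g => by ext s; rfl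
      map_smul' := fun r f => by ext s; rfl } 1
    (fun f => by simpa [sigma] using f.norm_compContinuous_le _)

lemma shift_apply (f : A) : shift f = sigma 1 f := rfl

lemma shiftpow_mul (d : ℕ) (f g : A) : (shift ^ d) (f * g) = (shift ^ d) f * (shift ^ d) g := by
  induction d with
  | zero => simp
  | succ n ih =>
      rw [_root_.pow_succ']
      simp only [ContinuousLinearMap.mul_apply, shift_apply, ih, sigma_mul]

lemma shiftpow_star (d : ℕ) (f : A) : (shift ^ d) (star f) = star ((shift ^ d) f) := by
  induction d with
  | zero => simp
  | succ n ih =>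
      rw [_root_.pow_succ']
      simp only [ContinuousLinearMap.mul_apply, shift_apply, ih, sigma_star]

lemma shift_rsmul (r : ℝ) (f : A) : shift (r • f) = r • shift f := by ext s; rfl

/-- multiplication operator -/
def mulOp (a : A) : A →L[ℂ] A := ContinuousLinearMap.mul ℂ A a

lemma mulOp_apply (a x : A) : mulOp a x = a * x := rfl

/-- the one-step Gram-positive approximation of `exp (ε 𝓛)`. -/
def TOp (ε : ℝ) (ζi βi ζj βj : A) : A →L[ℂ] A :=
  mulOp (star (1 + ε • βi) * (1 + ε • βj)) + ε • (mulOp (star ζi * ζj) ∘L shift)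

lemma TOp_apply (ε : ℝ) (ζi βi ζj βj x : A) :
    TOp ε ζi βi ζj βj x
      = star (1 + ε • βi) * (1 + ε • βj) * x + ε • (star ζi * ζj * sigma 1 x) := rfl

attribute [irreducible] sigma shift mulOp TOp

/-- Gram-type kernels of operators. -/
def IsGram (k : ℕ) (K : Fin k → Fin k → (A →L[ℂ] A)) : Prop :=
  ∃ (ι : Type) (_ : Fintype ι) (w : ι → ℝ) (d : ι → ℕ) (V : Fin k → ι → A),
    (∀ a, 0 ≤ w a) ∧
    ∀ i j x, K i j x = ∑ a, w a • (star (V i a) * (shift ^ d a) x * V j a)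

lemma isGram_one (k : ℕ) : IsGram k (fun _ _ => 1) := by
  refine ⟨Unit, inferInstance, fun _ => 1, fun _ => 0, fun _ _ => 1, fun _ => zero_le_one, ?_⟩
  intro i j x
  simp

lemma isGram_step (k : ℕ) (ε : ℝ) (hε : 0 ≤ ε) (ζ β : Fin k → A)
    (K : Fin k → Fin k → (A →L[ℂ] A)) (h : IsGram k K) :
    IsGram k (fun i j => (TOp ε (ζ i) (β i) (ζ j) (β j)) ∘L K i j) := by
  obtain ⟨ι, hι, w, d, V, hw, hK⟩ := h
  refine ⟨ι ⊕ ι, inferInstance, Sum.elim w (fun a => ε * w a),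
    Sum.elim d (fun a => d a + 1),
    fun i => Sum.elim (fun a => (1 + ε • β i) * V i a) (fun a => ζ i * sigma 1 (V i a)),
    ?_, ?_⟩
  · rintro (a | a)
    · exact hw a
    · exact mul_nonneg hε (hw a)
  intro i j x
  simp only [ContinuousLinearMap.comp_apply, TOp_apply, hK]
  rw [Fintype.sum_sum_type]
  simp only [Sum.elim_inl, Sum.elim_inr]
  congr 1
  · rw [Finset.mul_sum]
    refine Finset.sum_congr rfl fun a _ => ?_
    rw [mul_smul_comm]
    congr 1
    rw [star_mul ((1 + ε • β i)) (V i a)]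
    ring
  · have key : sigma 1 (∑ a, w a • (star (V i a) * (shift ^ d a) x * V j a))
        = ∑ a, w a • (star (sigma 1 (V i a)) * (shift ^ (d a + 1)) x * sigma 1 (V j a)) := by
      rw [← shift_apply, map_sum]
      refine Finset.sum_congr rfl fun a _ => ?_
      rw [shift_rsmul]
      congr 1
      rw [shift_apply, sigma_mul, sigma_mul, sigma_star, _root_.pow_succ',
        ContinuousLinearMap.mul_apply, shift_apply]
    rw [key, Finset.mul_sum, Finset.smul_sum]
    refine Finset.sum_congr rfl fun a _ => ?_
    rw [mul_smul_comm, smul_smul]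
    congr 1
    rw [star_mul (ζ i) (sigma 1 (V i a))]
    ring

lemma isGram_pow (k : ℕ) (ε : ℝ) (hε : 0 ≤ ε) (ζ β : Fin k → A) (n : ℕ) :
    IsGram k (fun i j => (TOp ε (ζ i) (β i) (ζ j) (β j)) ^ n) := by
  induction n with
  | zero => simpa using isGram_one k
  | succ n ih =>
      have : (fun i j => (TOp ε (ζ i) (β i) (ζ j) (β j)) ^ (n + 1))
          = fun i j => (TOp ε (ζ i) (β i) (ζ j) (β j)) ∘L ((TOp ε (ζ i) (β i) (ζ j) (β j)) ^ n) := by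
        funext i j
        rw [_root_.pow_succ']
        rfl
      rw [this]
      exact isGram_step k ε hε ζ β _ ih

lemma isGram_pos (k : ℕ) (K : Fin k → Fin k → (A →L[ℂ] A)) (h : IsGram k K)
    (b c : Fin k → A) (s : ℝ≥0) :
    0 ≤ (∑ i, ∑ j, star (b i) * K i j (star (c i) * c j) * b j) s := by
  obtain ⟨ι, hι, w, d, V, hw, hK⟩ := h
  set g : ι → Fin k → ℂ := fun a i => ((shift ^ d a) (c i)) s * (V i a) s * (b i) s with hg
  have key : (∑ i, ∑ j, star (b i) * K i j (star (c i) * c j) * b j) s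
      = ∑ a, w a • ((starRingEnd ℂ (∑ i, g a i)) * (∑ j, g a j)) := by
    rw [BoundedContinuousFunction.sum_apply]
    have : ∀ i j : Fin k, (star (b i) * K i j (star (c i) * c j) * b j) s
        = ∑ a, w a • ((starRingEnd ℂ (g a i)) * g a j) := by
      intro i j
      rw [mul_apply, mul_apply, hK, BoundedContinuousFunction.sum_apply, star_apply, Finset.mul_sum, Finset.sum_mul]
      refine Finset.sum_congr rfl fun a _ => ?_
      rw [shiftpow_mul, shiftpow_star, BoundedContinuousFunction.smul_apply, mul_apply, mul_apply, mul_apply]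
      simp only [star_apply, smul_eq_mul, Complex.real_smul, Complex.star_def, map_mul, hg]
      ring
    calc (∑ i, (∑ j, star (b i) * K i j (star (c i) * c j) * b j) s)
        = ∑ i, ∑ j, ∑ a, w a • ((starRingEnd ℂ (g a i)) * g a j) := by
          refine Finset.sum_congr rfl fun i _ => ?_
          rw [BoundedContinuousFunction.sum_apply]
          exact Finset.sum_congr rfl fun j _ => this i j
      _ = ∑ a, ∑ i, ∑ j, w a • ((starRingEnd ℂ (g a i)) * g a j) := by
          have h1 : (∑ i : Fin k, ∑ j : Fin k, ∑ a : ι, w a • ((starRingEnd ℂ (g a i)) * g a j))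
              = ∑ i : Fin k, ∑ a : ι, ∑ j : Fin k, w a • ((starRingEnd ℂ (g a i)) * g a j) :=
            Finset.sum_congr rfl fun i _ => Finset.sum_comm
          rw [h1]
          exact Finset.sum_comm
      _ = ∑ a, w a • ((starRingEnd ℂ (∑ i, g a i)) * (∑ j, g a j)) := by
          refine Finset.sum_congr rfl fun a _ => ?_
          rw [map_sum, Finset.sum_mul, Finset.smul_sum]
          refine Finset.sum_congr rfl fun i _ => ?_
          rw [Finset.mul_sum, Finset.smul_sum]
  rw [key]
  refine Finset.sum_nonneg fun a _ => ?_
  rw [Complex.real_smul]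
  refine mul_nonneg (by exact_mod_cast hw a) ?_
  rw [← Complex.star_def]
  exact star_mul_self_nonneg _

section ExpBounds

variable {E : Type*} [NormedRing E] [NormedAlgebra ℂ E] [CompleteSpace E] [NormOneClass E]

lemma mynorm_pow (X : E) (n : ℕ) : ‖X ^ n‖ ≤ ‖X‖ ^ n := by
  induction n with
  | zero => simp
  | succ n ih =>
      rw [pow_succ, pow_succ]
      exact (norm_mul_le _ _).trans (mul_le_mul_of_nonneg_right ih (norm_nonneg X))

lemma mynorm_exp_le (X : E) : ‖exp X‖ ≤ Real.exp ‖X‖ := by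
  rw [Real.exp_eq_exp_ℝ, exp_eq_tsum ℂ (𝔸 := E), exp_eq_tsum ℝ (𝔸 := ℝ)]
  refine (norm_tsum_le_tsum_norm (norm_expSeries_summable' X)).trans ?_
  refine Summable.tsum_le_tsum (fun n => ?_) (norm_expSeries_summable' X)
    (expSeries_summable' (𝕂 := ℝ) ‖X‖)
  rw [norm_smul, smul_eq_mul]
  have h1 : ‖((n ! : ℂ))⁻¹‖ = ((n ! : ℝ))⁻¹ := by rw [norm_inv]; norm_num
  rw [h1]
  exact mul_le_mul_of_nonneg_left (mynorm_pow X n) (by positivity)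

lemma mynorm_exp_sub_one_sub_id_le (X : E) :
    ‖exp X - 1 - X‖ ≤ ‖X‖ ^ 2 * Real.exp ‖X‖ := by
  have hs : Summable fun n : ℕ => ((n ! : ℂ))⁻¹ • X ^ n := expSeries_summable' X
  have hs1 : Summable fun n : ℕ => ((((n + 1)) ! : ℂ))⁻¹ • X ^ (n + 1) :=
    (summable_nat_add_iff 1).2 hs
  have hs2 : Summable fun n : ℕ => ((((n + 2)) ! : ℂ))⁻¹ • X ^ (n + 2) :=
    (summable_nat_add_iff 2).2 hs
  have h2 : exp X - 1 - X = ∑' n : ℕ, ((((n + 2)) ! : ℂ))⁻¹ • X ^ (n + 2) := by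
    have h0 : exp X = ∑' n : ℕ, ((n ! : ℂ))⁻¹ • X ^ n := by rw [exp_eq_tsum ℂ]
    rw [h0, Summable.tsum_eq_zero_add hs, Summable.tsum_eq_zero_add hs1]
    have e0 : ((((0:ℕ)) ! : ℂ))⁻¹ • X ^ (0:ℕ) = 1 := by simp
    have e1 : ((((0+1:ℕ)) ! : ℂ))⁻¹ • X ^ (0+1:ℕ) = X := by simp
    rw [e0, e1]
    have heq : ∀ n : ℕ, ((((n+1+1)) ! : ℂ))⁻¹ • X ^ (n+1+1) = ((((n+2)) ! : ℂ))⁻¹ • X ^ (n+2) := by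
      intro n; norm_num
    rw [tsum_congr heq]
    abel
  rw [h2]
  have hnorm : ∀ n : ℕ, ‖((((n + 2)) ! : ℂ))⁻¹ • X ^ (n + 2)‖
      ≤ ‖X‖ ^ 2 * (((n ! : ℝ))⁻¹ * ‖X‖ ^ n) := by
    intro n
    rw [norm_smul]
    have h1 : ‖((((n + 2)) ! : ℂ))⁻¹‖ = ((((n + 2)) ! : ℝ))⁻¹ := by rw [norm_inv]; norm_num
    rw [h1]
    calc ((((n + 2)) ! : ℝ))⁻¹ * ‖X ^ (n + 2)‖ ≤ ((((n + 2)) ! : ℝ))⁻¹ * ‖X‖ ^ (n + 2) :=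
          mul_le_mul_of_nonneg_left (mynorm_pow X _) (by positivity)
      _ ≤ ((n ! : ℝ))⁻¹ * ‖X‖ ^ (n + 2) := by
          refine mul_le_mul_of_nonneg_right ?_ (by positivity)
          refine inv_anti₀ (by positivity) ?_
          exact_mod_cast Nat.factorial_le (by omega)
      _ = ‖X‖ ^ 2 * (((n ! : ℝ))⁻¹ * ‖X‖ ^ n) := by ring
  have hg : Summable fun n : ℕ => ‖X‖ ^ 2 * (((n ! : ℝ))⁻¹ * ‖X‖ ^ n) := by
    have := expSeries_summable' (𝕂 := ℝ) ‖X‖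
    simp only [smul_eq_mul] at this
    exact this.mul_left _
  have hs3 : Summable fun n : ℕ => ‖((((n + 2)) ! : ℂ))⁻¹ • X ^ (n + 2)‖ :=
    Summable.of_nonneg_of_le (fun n => norm_nonneg _) hnorm hg
  refine (norm_tsum_le_tsum_norm hs3).trans ?_
  refine (Summable.tsum_le_tsum hnorm hs3 hg).trans ?_
  rw [tsum_mul_left, Real.exp_eq_exp_ℝ, exp_eq_tsum ℝ]
  simp [smul_eq_mul]

lemma mypow_sub_pow (T R : E) (B : ℝ) (hT : ‖T‖ ≤ B) (hR : ‖R‖ ≤ B) :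
    ∀ n : ℕ, ‖T ^ (n + 1) - R ^ (n + 1)‖ ≤ (n + 1) * B ^ n * ‖T - R‖ := by
  have hB : 0 ≤ B := (norm_nonneg T).trans hT
  intro n
  induction n with
  | zero => simpa using le_refl ‖T - R‖
  | succ n ih =>
      have hid : T ^ (n + 2) - R ^ (n + 2)
          = (T - R) * T ^ (n + 1) + R * (T ^ (n + 1) - R ^ (n + 1)) := by
        rw [sub_mul, mul_sub, ← _root_.pow_succ' T (n+1), ← _root_.pow_succ' R (n+1)]
        abel
      have hTp : ‖T ^ (n + 1)‖ ≤ B ^ (n + 1) :=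
        (mynorm_pow T _).trans (pow_le_pow_left₀ (norm_nonneg T) hT _)
      calc ‖T ^ (n + 2) - R ^ (n + 2)‖
          ≤ ‖(T - R) * T ^ (n + 1)‖ + ‖R * (T ^ (n + 1) - R ^ (n + 1))‖ := by
            rw [hid]; exact norm_add_le _ _
        _ ≤ ‖T - R‖ * B ^ (n + 1) + B * ((n + 1) * B ^ n * ‖T - R‖) := by
            refine add_le_add ((norm_mul_le _ _).trans ?_) ((norm_mul_le _ _).trans ?_)
            · exact mul_le_mul_of_nonneg_left hTp (norm_nonneg _)
            · exact mul_le_mul hR ih (norm_nonneg _) hB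
        _ = ((n : ℝ) + 1 + 1) * (B * B ^ n) * ‖T - R‖ := by ring
        _ = ((n : ℝ) + 2) * B ^ (n + 1) * ‖T - R‖ := by rw [← _root_.pow_succ' B n]; ring
      push_cast
      ring_nf
      exact le_refl _

end ExpBounds

lemma TOp_eq (ε : ℝ) (ζi βi ζj βj : A) (Lij : A →L[ℂ] A)
    (hL : ∀ x, Lij x = star ζi * sigma 1 x * ζj + star βi * x + x * βj) :
    TOp ε ζi βi ζj βj = 1 + (ε : ℂ) • Lij + ((ε : ℂ) ^ 2) • mulOp (star βi * βj) := by
  ext x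
  simp only [TOp_apply, ContinuousLinearMap.add_apply, ContinuousLinearMap.one_apply,
    ContinuousLinearMap.smul_apply, hL, mulOp_apply]
  have hsm : ∀ (r : ℂ) (y : A), r • y = algebraMap ℂ A r * y := fun r y => Algebra.smul_def r y
  have hsm' : ∀ (r : ℝ) (y : A), r • y = algebraMap ℂ A (r : ℂ) * y := fun r y => by
    rw [← algebraMap_smul ℂ r y, hsm]; norm_num
  have hstar : star (1 + ε • βi) = 1 + ε • star βi := by
    rw [star_add, star_one, star_smul, star_trivial]
  rw [hstar]
  simp only [hsm, hsm', map_pow]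
  ring

lemma TOp_pow_tendsto (t : ℝ) (ht : 0 ≤ t) (ζi βi ζj βj : A) (Lij : A →L[ℂ] A)
    (hL : ∀ x, Lij x = star ζi * sigma 1 x * ζj + star βi * x + x * βj) :
    Tendsto (fun n : ℕ => ‖(TOp (t / n) ζi βi ζj βj) ^ n - exp ((t : ℂ) • Lij)‖)
      atTop (𝓝 0) := by
  set l := ‖Lij‖ with hl
  set a := t * l with hadef
  set m := ‖mulOp (star βi * βj)‖ with hm
  set C := t ^ 2 * (m + l ^ 2 * Real.exp a) with hCdef
  have hl0 : 0 ≤ l := norm_nonneg _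
  have hm0 : 0 ≤ m := norm_nonneg _
  have ha : 0 ≤ a := by positivity
  have hC : 0 ≤ C := by positivity
  set D := C * Real.exp (a + C) with hD
  refine squeeze_zero' (Eventually.of_forall fun n => norm_nonneg _) ?_
    (tendsto_const_div_atTop_nhds_zero_nat D)
  filter_upwards [eventually_ge_atTop 1] with n hn
  have hn0 : (n : ℝ) ≠ 0 := Nat.cast_ne_zero.2 (by omega)
  have hn1 : (1 : ℝ) ≤ (n : ℝ) := by exact_mod_cast hn
  set ε := t / n with hε
  have hε0 : 0 ≤ ε := by positivity
  have hεt : ε ≤ t := div_le_self ht hn1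
  set X := (ε : ℂ) • Lij with hX
  have hXn : ‖X‖ = a / n := by
    rw [hX, norm_smul ((ε:ℂ)) Lij, Complex.norm_real, Real.norm_of_nonneg hε0, hε, hadef]
    ring
  have hXa : ‖X‖ ≤ a := by rw [hXn]; exact div_le_self ha hn1
  set T := TOp ε ζi βi ζj βj with hT
  set R := exp X with hR
  have hexp : exp ((t : ℂ) • Lij) = R ^ n := by
    let +nondep : NormedAlgebra ℚ (A →L[ℂ] A) := .restrictScalars ℚ ℂ (A →L[ℂ] A)
    have h := exp_nsmul (𝔸 := A →L[ℂ] A) n ((ε : ℂ) • Lij)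
    rw [hR, hX, ← h, ← Nat.cast_smul_eq_nsmul ℂ n ((ε : ℂ) • Lij), smul_smul]
    congr 2
    push_cast [hε]
    field_simp
  have hTR : ‖T - R‖ ≤ C / n ^ 2 := by
    have h1 : T - R = ((ε : ℂ) ^ 2) • mulOp (star βi * βj) - (R - 1 - X) := by
      rw [hT, TOp_eq ε ζi βi ζj βj Lij hL, hX]; abel
    rw [h1]
    refine (norm_sub_le _ _).trans ?_
    have h2 : ‖((ε : ℂ) ^ 2) • mulOp (star βi * βj)‖ = ε ^ 2 * m := by
      rw [norm_smul ((ε:ℂ)^2) (mulOp (star βi * βj)), hm]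
      norm_num [abs_of_nonneg hε0]
    have h3 : ‖R - 1 - X‖ ≤ (a / n) ^ 2 * Real.exp a := by
      refine (mynorm_exp_sub_one_sub_id_le X).trans ?_
      rw [hXn]
      gcongr
      exact div_le_self ha hn1
    rw [h2]
    have h4 : (a / n) ^ 2 * Real.exp a = ε ^ 2 * (l ^ 2 * Real.exp a) := by
      rw [hadef, hε]; field_simp
    rw [h4] at h3
    calc ε ^ 2 * m + ‖R - 1 - X‖ ≤ ε ^ 2 * m + ε ^ 2 * (l ^ 2 * Real.exp a) :=
          add_le_add_right h3 _
      _ = C / n ^ 2 := by rw [hCdef, hε]; field_simp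
  have hRB : ‖R‖ ≤ Real.exp (a / n) := (mynorm_exp_le X).trans (by rw [hXn])
  set B := Real.exp ((a + C) / n) with hB
  have hB1 : (1 : ℝ) ≤ B := Real.one_le_exp (by positivity)
  have hBn : Real.exp (a / n) + C / n ^ 2 ≤ B := by
    have e1 : (1 : ℝ) ≤ Real.exp (a / n) := Real.one_le_exp (by positivity)
    have e2 : C / n + 1 ≤ Real.exp (C / n) := Real.add_one_le_exp _
    have e3 : C / n ^ 2 ≤ C / n := by
      apply div_le_div_of_nonneg_left hC (by positivity)
      have h7 : (n:ℝ)^1 ≤ (n:ℝ)^2 := pow_le_pow_right₀ hn1 one_le_two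
      simpa using h7
    calc Real.exp (a / n) + C / n ^ 2 ≤ Real.exp (a / n) + C / n := by linarith
      _ ≤ Real.exp (a / n) + Real.exp (a / n) * (C / n) := by
          have h6 : C / n ≤ Real.exp (a / n) * (C / n) :=
            le_mul_of_one_le_left (div_nonneg hC (le_trans zero_le_one hn1)) e1
          linarith
      _ = Real.exp (a / n) * (C / n + 1) := by ring
      _ ≤ Real.exp (a / n) * Real.exp (C / n) :=
          mul_le_mul_of_nonneg_left e2 (Real.exp_pos (a / n)).le
      _ = B := by rw [hB, ← Real.exp_add]; congr 1; ring
  have hTB : ‖T‖ ≤ B :=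
    calc ‖T‖ = ‖R + (T - R)‖ := by rw [add_sub_cancel]
      _ ≤ ‖R‖ + ‖T - R‖ := norm_add_le _ _
      _ ≤ Real.exp (a / n) + C / n ^ 2 := add_le_add hRB hTR
      _ ≤ B := hBn
  have hRB' : ‖R‖ ≤ B := by
    refine hRB.trans (Real.exp_le_exp.2 ?_)
    gcongr
    linarith
  obtain ⟨n', rfl⟩ : ∃ n', n = n' + 1 := ⟨n - 1, by omega⟩
  rw [hexp]
  have hpow := mypow_sub_pow T R B hTB hRB' n'
  have hBpow : B ^ n' ≤ B ^ (n' + 1) := pow_le_pow_right₀ hB1 (by omega)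
  have hBn' : B ^ (n' + 1) = Real.exp (a + C) := by
    rw [hB, ← Real.exp_nat_mul]
    congr 1
    field_simp
  calc ‖T ^ (n' + 1) - R ^ (n' + 1)‖ ≤ ((n' : ℝ) + 1) * B ^ n' * ‖T - R‖ := hpow
    _ ≤ ((n' : ℝ) + 1) * Real.exp (a + C) * (C / ((n' : ℝ) + 1) ^ 2) := by
        have hcast : ((n':ℝ) + 1) = ((n' + 1 : ℕ) : ℝ) := by push_cast; ring
        refine mul_le_mul ?_ ?_ (norm_nonneg _) (by positivity)
        · gcongr
          rw [← hBn']
          exact hBpow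
        · rw [hcast]; exact hTR
    _ = D / ((n' + 1 : ℕ) : ℝ) := by
        rw [hD]
        push_cast
        have h5 : ((n' : ℝ) + 1) ≠ 0 := by positivity
        field_simp

/-- complete positive definiteness of the CPD-semigroup `𝒦_t = e^{t𝓛}`:
for every `t ≥ 0`, all pairs `(ζᵢ, βᵢ) ∈ ℬ × ℬ` and all `bᵢ, cᵢ ∈ ℬ`,
`∑_{i,j} bᵢ* (exp (t 𝓛^{(ζᵢ,βᵢ),(ζⱼ,βⱼ)}))(cᵢ* cⱼ) bⱼ ≥ 0` in `ℬ`, where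
`𝓛^{(ζ,β),(ζ',β')}(b) = ζ̄ σ₁(b) ζ' + β̄ b + b β'`. -/
theorem stmt1 (t : ℝ) (ht : 0 ≤ t) (k : ℕ) (ζ β b c : Fin k → A)
    (hζ : ∀ i, memB (ζ i)) (hβ : ∀ i, memB (β i))
    (hb : ∀ i, memB (b i)) (hc : ∀ i, memB (c i))
    (L : Fin k → Fin k → (A →L[ℂ] A))
    (hL : ∀ i j (x : A), L i j x = star (ζ i) * sigma 1 x * ζ j + star (β i) * x + x * β j) :
    ∀ s : ℝ≥0,
      0 ≤ (∑ i, ∑ j, star (b i) * (exp ((t : ℂ) • L i j) (star (c i) * c j)) * b j) s := by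
  intro s
  have keyconv : ∀ i j : Fin k,
      Tendsto (fun n : ℕ => ‖(TOp (t / n) (ζ i) (β i) (ζ j) (β j)) ^ n
        - exp ((t : ℂ) • L i j)‖) atTop (𝓝 0) :=
    fun i j => TOp_pow_tendsto t ht (ζ i) (β i) (ζ j) (β j) (L i j) (hL i j)
  set F : ℕ → ℂ := fun n => ∑ i, ∑ j,
    (star (b i) * (((TOp (t / n) (ζ i) (β i) (ζ j) (β j)) ^ n) (star (c i) * c j)) * b j) s
    with hF
  have happly : ∀ (K : Fin k → Fin k → (A →L[ℂ] A)),
      (∑ i, ∑ j, star (b i) * K i j (star (c i) * c j) * b j) s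
        = ∑ i, ∑ j, (star (b i) * K i j (star (c i) * c j) * b j) s := by
    intro K
    rw [BoundedContinuousFunction.sum_apply]
    exact Finset.sum_congr rfl fun i _ => by rw [BoundedContinuousFunction.sum_apply]
  have hpos : ∀ n, 0 ≤ F n := by
    intro n
    have h0 := isGram_pos k _ (isGram_pow k (t / n) (by positivity) ζ β n) b c s
    rw [happly] at h0
    exact h0
  have main : ∀ i j : Fin k,
      Tendsto (fun n : ℕ =>
          (star (b i) * (((TOp (t / n) (ζ i) (β i) (ζ j) (β j)) ^ n) (star (c i) * c j)) * b j) s)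
        atTop
        (𝓝 ((star (b i) * (exp ((t : ℂ) • L i j) (star (c i) * c j)) * b j) s)) := by
    intro i j
    rw [tendsto_iff_norm_sub_tendsto_zero]
    have hdiff : ∀ u v : A,
        (star (b i) * u * b j) s - (star (b i) * v * b j) s
          = (star (b i) * (u - v) * b j) s := by
      intro u v
      simp only [mul_apply, BoundedContinuousFunction.sub_apply]
      ring
    refine squeeze_zero (g := fun n : ℕ => (‖b i‖ * (‖star (c i) * c j‖ * ‖b j‖)) *
        ‖(TOp (t / n) (ζ i) (β i) (ζ j) (β j)) ^ n - exp ((t : ℂ) • L i j)‖)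
      (fun n => norm_nonneg _) (fun n => ?_) ?_
    · rw [hdiff]
      have hsub : ((TOp (t / n) (ζ i) (β i) (ζ j) (β j)) ^ n) (star (c i) * c j)
            - exp ((t : ℂ) • L i j) (star (c i) * c j)
          = ((TOp (t / n) (ζ i) (β i) (ζ j) (β j)) ^ n - exp ((t : ℂ) • L i j))
              (star (c i) * c j) := by
        rw [ContinuousLinearMap.sub_apply]
      rw [hsub]
      set w : A := ((TOp (t / n) (ζ i) (β i) (ζ j) (β j)) ^ n - exp ((t : ℂ) • L i j))
        (star (c i) * c j) with hw
      calc ‖(star (b i) * w * b j) s‖ ≤ ‖star (b i) * w * b j‖ := norm_coe_le_norm _ s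
        _ ≤ ‖star (b i) * w‖ * ‖b j‖ := norm_mul_le _ _
        _ ≤ ‖star (b i)‖ * ‖w‖ * ‖b j‖ :=
            mul_le_mul_of_nonneg_right (norm_mul_le _ _) (norm_nonneg _)
        _ ≤ ‖b i‖ * (‖(TOp (t / n) (ζ i) (β i) (ζ j) (β j)) ^ n - exp ((t : ℂ) • L i j)‖
              * ‖star (c i) * c j‖) * ‖b j‖ := by
            rw [norm_star]
            refine mul_le_mul_of_nonneg_right
              (mul_le_mul_of_nonneg_left ?_ (norm_nonneg _)) (norm_nonneg _)
            exact ContinuousLinearMap.le_opNorm _ _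
        _ = (‖b i‖ * (‖star (c i) * c j‖ * ‖b j‖)) *
              ‖(TOp (t / n) (ζ i) (β i) (ζ j) (β j)) ^ n - exp ((t : ℂ) • L i j)‖ := by ring
    · simpa using (keyconv i j).const_mul (‖b i‖ * (‖star (c i) * c j‖ * ‖b j‖))
  have hsum : Tendsto F atTop (𝓝 (∑ i, ∑ j,
      (star (b i) * (exp ((t : ℂ) • L i j) (star (c i) * c j)) * b j) s)) := by
    rw [hF]
    exact tendsto_finset_sum _ fun i _ => tendsto_finset_sum _ fun j _ => main i j
  rw [happly (fun i j => exp ((t : ℂ) • L i j))]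
  exact ge_of_tendsto' hsum hpos
end
end

section
/- There is no function $g\in C_0[0,+\infty)$ such that $\sup_{s\ge 0}|g(s)\,b(s)|=\sup_{s\ge 0}|b(s)|$ for every $b\in\mathcal B$ (in particular, there is no $g\in C_0[0,+\infty)$ with $\overline{g}\,g=1$, i.e. with $|g(s)|=1$ for all $s$). Consequently, there is no isometric $\mathcal B$-linear bijection from $\mathcal B$ onto $C_0[0,+\infty)$, where both are regarded as normed $\mathcal B$-modules via pointwise multiplication with the supremum norm. (This shows that the index of the product subsystem $E$, which is isomorphic to $C_0[0,+\infty)$, differs from the index $\mathcal B$ of the containing time ordered Fock system.) -/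
/- `𝒜` denotes the C*-algebra of bounded continuous functions `[0,∞) → ℂ` (sup norm,
pointwise operations, conjugation as involution), realized as `BoundedContinuousFunction ℝ≥0 ℂ`.
The paper's algebra `ℬ = C₀[0,∞) + ℂ·1` is the set of `f ∈ 𝒜` possessing a limit at
infinity (`memB`), and `C₀[0,∞)` is the set of `f ∈ 𝒜` vanishing at infinity (`memC0`).
Positivity `0 ≤ b` in `ℬ` is the C*-order, i.e. pointwise `0 ≤ b s` in `ℂ`
(with the `ComplexOrder`). -/

open Filter BoundedContinuousFunction NormedSpace
open scoped NNReal ComplexOrder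

noncomputable section

lemma memB_one : memB 1 := ⟨1, by rw [BoundedContinuousFunction.coe_one]; exact tendsto_const_nhds⟩

lemma noG : ¬ ∃ g : A, memC0 g ∧ ∀ b : A, memB b → ‖g * b‖ = ‖b‖ := by
  rintro ⟨g, hg0, hg⟩
  obtain ⟨T, hT⟩ : ∃ T : ℝ≥0, ∀ s ≥ T, ‖g s‖ < 1/2 := by
    have h := (Metric.tendsto_nhds.mp hg0 (1/2) (by norm_num))
    simpa [dist_zero_right] using eventually_atTop.mp h
  set bfun : ℝ≥0 → ℂ := fun s => ((min (s - T) 1 : ℝ≥0) : ℝ) with hbfun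
  have hcont : Continuous bfun := by
    apply Complex.continuous_ofReal.comp
    apply NNReal.continuous_coe.comp
    exact (continuous_id.sub continuous_const).min continuous_const
  have hbd : ∀ s, ‖bfun s‖ ≤ 1 := by
    intro s
    simp only [hbfun, Complex.norm_real, Real.norm_eq_abs, abs_of_nonneg (NNReal.coe_nonneg _)]
    exact_mod_cast min_le_right _ 1
  set b : A := BoundedContinuousFunction.ofNormedAddCommGroup bfun hcont 1 hbd with hb
  have hbs : ∀ s, b s = bfun s := fun s => rfl
  have hb1val : ∀ s ≥ T + 1, b s = 1 := by
    intro s hs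
    have h1 : (1 : ℝ≥0) ≤ s - T := le_tsub_of_add_le_left hs
    simp [hbs, hbfun, min_eq_right, h1]
  have hbB : memB b := by
    refine ⟨1, Tendsto.congr' ?_ tendsto_const_nhds⟩
    filter_upwards [eventually_ge_atTop (T + 1)] with s hs
    exact (hb1val s hs).symm
  have hbnorm : ‖b‖ = 1 := by
    refine le_antisymm ((norm_le zero_le_one).2 hbd) ?_
    have := b.norm_coe_le_norm (T + 1)
    rwa [hb1val (T + 1) le_rfl, norm_one] at this
  have hle : ‖g * b‖ ≤ 1/2 := by
    refine (norm_le (by norm_num)).2 fun s => ?_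
    rw [coe_mul]
    simp only [Pi.mul_apply, norm_mul]
    rcases le_or_gt T s with h | h
    · calc ‖g s‖ * ‖b s‖ ≤ (1/2) * 1 :=
        mul_le_mul (le_of_lt (hT s h)) (hbd s) (norm_nonneg _) (by norm_num)
      _ = 1/2 := by ring
    · have : b s = 0 := by simp [hbs, hbfun, tsub_eq_zero_of_le h.le]
      simp [this]
  have := hg b hbB
  rw [hbnorm] at this
  linarith

lemma noU : ¬ ∃ g : A, memC0 g ∧ ∀ s : ℝ≥0, ‖g s‖ = 1 := by
  rintro ⟨g, hg0, h1⟩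
  obtain ⟨s, hs⟩ := (Metric.tendsto_nhds.mp hg0 (1/2) (by norm_num)).exists
  rw [dist_zero_right] at hs
  have : ‖g s‖ = 1 := h1 s
  linarith


/-- there is no `g ∈ C₀[0,∞)` with `‖g b‖ = ‖b‖` for every `b ∈ ℬ`
(in particular none with `ḡ g = 1`); consequently there is no isometric `ℬ`-linear
bijection from `ℬ` onto `C₀[0,∞)` (both regarded as normed `ℬ`-modules via pointwise
multiplication, with the supremum norm). Hence `ind E ≅ C₀[0,∞)` differs from the
index `ℬ` of the containing time ordered Fock system. -/
theorem stmt4 :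
    (¬ ∃ g : A, memC0 g ∧ ∀ b : A, memB b → ‖g * b‖ = ‖b‖)
    ∧ (¬ ∃ g : A, memC0 g ∧ star g * g = 1)
    ∧ (¬ ∃ g : A, memC0 g ∧ ∀ s : ℝ≥0, ‖g s‖ = 1)
    ∧ (¬ ∃ Φ : A → A,
        (∀ f, memB f → memC0 (Φ f)) ∧
        (∀ h, memC0 h → ∃ f, memB f ∧ Φ f = h) ∧
        (∀ f g, memB f → memB g → Φ f = Φ g → f = g) ∧
        (∀ f g, memB f → memB g → Φ (f + g) = Φ f + Φ g) ∧
        (∀ b f, memB b → memB f → Φ (b * f) = b * Φ f) ∧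
        (∀ f, memB f → ‖Φ f‖ = ‖f‖)) := by
  refine ⟨noG, ?_, noU, ?_⟩
  · rintro ⟨g, hg0, hgg⟩
    refine noU ⟨g, hg0, fun s => ?_⟩
    have h := congrArg (fun f : A => f s) hgg
    simp only [coe_mul, Pi.mul_apply, star_apply, coe_one, Pi.one_apply] at h
    have h2 : ‖g s‖ * ‖g s‖ = 1 := by
      have := congrArg (‖·‖) h
      simpa [norm_mul] using this
    set a := ‖g s‖
    have ha : 0 ≤ a := norm_nonneg _
    have h3 : (a - 1) * (a + 1) = 0 := by linear_combination h2
    rcases mul_eq_zero.mp h3 with h4 | h4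
    · linarith
    · linarith
  · rintro ⟨Φ, h1, _h2, _h3, _h4, h5, h6⟩
    refine noG ⟨Φ 1, h1 1 memB_one, fun b hb => ?_⟩
    have h := h5 b 1 hb memB_one
    rw [mul_one] at h
    rw [mul_comm, ← h, h6 b hb]
end
end
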